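/- arXiv:2510.21241 — 9 statements merged into one kernel-verified Lean document; each statement's English description precedes it below -/
import Mathlib

section
/- Assume W₁ is invertible. Then the preconditioner 𝒫 factors as 𝒫 = (L ⊗ M)·W₁, 𝒫 is invertible, and the preconditioned system matrix satisfies 𝒫⁻¹𝒜 = I_{sn} + W₁⁻¹W₂. -/
open Matrix Kronecker

/-- Assume `W₁` is invertible. Then the preconditioner factors as
`calP = (L ⊗ M) * W₁`, `calP` is invertible, and `calP⁻¹calA = I + W₁⁻¹W₂`. -/
theorem preconditioner_factorization
    (n s : ℕ) (hn : 0 < n) (hs : 0 < s)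
    (M K : Matrix (Fin n) (Fin n) ℝ) (hM : IsUnit M) (τ : ℝ)
    (L Uhat A : Matrix (Fin s) (Fin s) ℝ)
    (hL : IsUnit L) (hA : IsUnit A)
    (hUhat : ∀ i j : Fin s, j ≤ i → Uhat i j = 0)
    (hAinv : A⁻¹ = L * (1 + Uhat))
    (calA calP W₁ W₂ : Matrix (Fin s × Fin n) (Fin s × Fin n) ℝ)
    (hcalA : calA = A⁻¹ ⊗ₖ M + τ • ((1 : Matrix (Fin s) (Fin s) ℝ) ⊗ₖ K))
    (hcalP : calP = L ⊗ₖ M + τ • ((1 : Matrix (Fin s) (Fin s) ℝ) ⊗ₖ K))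
    (hW₁ : W₁ = 1 + τ • (L⁻¹ ⊗ₖ (M⁻¹ * K)))
    (hW₂ : W₂ = Uhat ⊗ₖ (1 : Matrix (Fin n) (Fin n) ℝ))
    (hW₁unit : IsUnit W₁) :
    calP = (L ⊗ₖ M) * W₁ ∧ IsUnit calP ∧ calP⁻¹ * calA = 1 + W₁⁻¹ * W₂ := by
  have hMdet : IsUnit M.det := (Matrix.isUnit_iff_isUnit_det M).mp hM
  have hLdet : IsUnit L.det := (Matrix.isUnit_iff_isUnit_det L).mp hL
  have hLL : L * L⁻¹ = 1 := Matrix.mul_nonsing_inv L hLdet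
  have hMM : M * (M⁻¹ * K) = K := by
    rw [← mul_assoc, Matrix.mul_nonsing_inv M hMdet, one_mul]
  have hfact : calP = (L ⊗ₖ M) * W₁ := by
    rw [hcalP, hW₁, mul_add, mul_one, mul_smul_comm,
      ← Matrix.mul_kronecker_mul, hLL, hMM]
  have hLMunit : IsUnit (L ⊗ₖ M) := by
    rw [Matrix.isUnit_iff_isUnit_det, Matrix.det_kronecker]
    exact (hLdet.pow _).mul (hMdet.pow _)
  have hPunit : IsUnit calP := by
    rw [hfact]; exact hLMunit.mul hW₁unit
  refine ⟨hfact, hPunit, ?_⟩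
  have hcalA' : calA = (L ⊗ₖ M) * (W₁ + W₂) := by
    rw [mul_add, ← hfact, hW₂, ← Matrix.mul_kronecker_mul, mul_one, hcalA, hcalP, hAinv,
      mul_add, mul_one, Matrix.add_kronecker]
    abel
  rw [hfact, hcalA', Matrix.mul_inv_rev, mul_assoc, ← mul_assoc (L ⊗ₖ M)⁻¹,
    Matrix.nonsing_inv_mul _ ((Matrix.isUnit_iff_isUnit_det _).mp hLMunit),
    one_mul, mul_add, Matrix.nonsing_inv_mul _ ((Matrix.isUnit_iff_isUnit_det _).mp hW₁unit)]
end

section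
/- Assume τ M⁻¹K = Q D Q⁻¹ where Q ∈ ℝ^{n×n} is invertible and D = diag(μ₁, …, μ_n) is diagonal, and assume L ⊗ I_n + I_s ⊗ D is invertible. Then 𝒫 is invertible and the preconditioned matrix is similar, via I_s ⊗ Q, to the Kronecker-structured matrix X: 𝒫⁻¹𝒜 = (I_s ⊗ Q) · ( (L ⊗ I_n + I_s ⊗ D)⁻¹ (A⁻¹ ⊗ I_n + I_s ⊗ D) ) · (I_s ⊗ Q)⁻¹. -/
open Matrix Kronecker

/-- If `τ M⁻¹K = Q D Q⁻¹` with `Q` invertible and `D` diagonal, and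
`L ⊗ I_n + I_s ⊗ D` is invertible, then `𝒫` is invertible and
`𝒫⁻¹𝒜 = (I_s ⊗ Q) ((L ⊗ I_n + I_s ⊗ D)⁻¹ (A⁻¹ ⊗ I_n + I_s ⊗ D)) (I_s ⊗ Q)⁻¹`. -/
theorem preconditioned_similar_kronecker
    (n s : ℕ) (hn : 0 < n) (hs : 0 < s)
    (M K : Matrix (Fin n) (Fin n) ℝ) (hM : IsUnit M) (τ : ℝ)
    (L A : Matrix (Fin s) (Fin s) ℝ) (hL : IsUnit L) (hA : IsUnit A)
    (Q : Matrix (Fin n) (Fin n) ℝ) (hQ : IsUnit Q)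
    (μ : Fin n → ℝ)
    (hdiag : τ • (M⁻¹ * K) = Q * Matrix.diagonal μ * Q⁻¹)
    (hX : IsUnit (L ⊗ₖ (1 : Matrix (Fin n) (Fin n) ℝ)
        + (1 : Matrix (Fin s) (Fin s) ℝ) ⊗ₖ Matrix.diagonal μ))
    (calA calP : Matrix (Fin s × Fin n) (Fin s × Fin n) ℝ)
    (hcalA : calA = A⁻¹ ⊗ₖ M + τ • ((1 : Matrix (Fin s) (Fin s) ℝ) ⊗ₖ K))
    (hcalP : calP = L ⊗ₖ M + τ • ((1 : Matrix (Fin s) (Fin s) ℝ) ⊗ₖ K)) :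
    IsUnit calP ∧
    calP⁻¹ * calA
      = ((1 : Matrix (Fin s) (Fin s) ℝ) ⊗ₖ Q)
          * ((L ⊗ₖ (1 : Matrix (Fin n) (Fin n) ℝ)
              + (1 : Matrix (Fin s) (Fin s) ℝ) ⊗ₖ Matrix.diagonal μ)⁻¹
            * (A⁻¹ ⊗ₖ (1 : Matrix (Fin n) (Fin n) ℝ)
              + (1 : Matrix (Fin s) (Fin s) ℝ) ⊗ₖ Matrix.diagonal μ))
          * ((1 : Matrix (Fin s) (Fin s) ℝ) ⊗ₖ Q)⁻¹ := by
  have hMd : IsUnit M.det := (Matrix.isUnit_iff_isUnit_det M).mp hM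
  have hQd : IsUnit Q.det := (Matrix.isUnit_iff_isUnit_det Q).mp hQ
  set D : Matrix (Fin n) (Fin n) ℝ := Matrix.diagonal μ with hD
  set P1 : Matrix (Fin s × Fin n) (Fin s × Fin n) ℝ :=
    (1 : Matrix (Fin s) (Fin s) ℝ) ⊗ₖ M with hP1def
  set Qk : Matrix (Fin s × Fin n) (Fin s × Fin n) ℝ :=
    (1 : Matrix (Fin s) (Fin s) ℝ) ⊗ₖ Q with hQkdef
  set DL : Matrix (Fin s × Fin n) (Fin s × Fin n) ℝ :=
    L ⊗ₖ (1 : Matrix (Fin n) (Fin n) ℝ) + (1 : Matrix (Fin s) (Fin s) ℝ) ⊗ₖ D with hDLdef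
  set DA : Matrix (Fin s × Fin n) (Fin s × Fin n) ℝ :=
    A⁻¹ ⊗ₖ (1 : Matrix (Fin n) (Fin n) ℝ) + (1 : Matrix (Fin s) (Fin s) ℝ) ⊗ₖ D with hDAdef
  -- units
  have hP1u : IsUnit P1 := by
    rw [Matrix.isUnit_iff_isUnit_det, hP1def, Matrix.det_kronecker]
    simp only [Matrix.det_one, one_pow, one_mul]
    exact hMd.pow _
  have hQku : IsUnit Qk := by
    rw [Matrix.isUnit_iff_isUnit_det, hQkdef, Matrix.det_kronecker]
    simp only [Matrix.det_one, one_pow, one_mul]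
    exact hQd.pow _
  have hP1d : IsUnit P1.det := (Matrix.isUnit_iff_isUnit_det P1).mp hP1u
  have hQkd : IsUnit Qk.det := (Matrix.isUnit_iff_isUnit_det Qk).mp hQku
  have hDLd : IsUnit DL.det := (Matrix.isUnit_iff_isUnit_det DL).mp hX
  have hQkinv : Qk⁻¹ = (1 : Matrix (Fin s) (Fin s) ℝ) ⊗ₖ Q⁻¹ := by
    rw [hQkdef, Matrix.inv_kronecker,
      Matrix.inv_eq_right_inv (Matrix.one_mul (1 : Matrix (Fin s) (Fin s) ℝ))]
  have hMMK : M * (τ • (M⁻¹ * K)) = τ • K := by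
    rw [mul_smul_comm, ← Matrix.mul_assoc, Matrix.mul_nonsing_inv M hMd, Matrix.one_mul]
  have key : ∀ B : Matrix (Fin s) (Fin s) ℝ,
      P1 * (Qk * (B ⊗ₖ (1 : Matrix (Fin n) (Fin n) ℝ)
          + (1 : Matrix (Fin s) (Fin s) ℝ) ⊗ₖ D) * Qk⁻¹)
        = B ⊗ₖ M + τ • ((1 : Matrix (Fin s) (Fin s) ℝ) ⊗ₖ K) := by
    intro B
    have h1 : Qk * (B ⊗ₖ (1 : Matrix (Fin n) (Fin n) ℝ)
        + (1 : Matrix (Fin s) (Fin s) ℝ) ⊗ₖ D) * Qk⁻¹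
        = B ⊗ₖ (1 : Matrix (Fin n) (Fin n) ℝ)
          + (1 : Matrix (Fin s) (Fin s) ℝ) ⊗ₖ (τ • (M⁻¹ * K)) := by
      rw [hQkinv, hQkdef, Matrix.mul_add, Matrix.add_mul,
        ← Matrix.mul_kronecker_mul, ← Matrix.mul_kronecker_mul,
        ← Matrix.mul_kronecker_mul, ← Matrix.mul_kronecker_mul]
      simp only [Matrix.one_mul, Matrix.mul_one]
      rw [Matrix.mul_nonsing_inv Q hQd, hdiag]
    rw [h1, hP1def, Matrix.mul_add, ← Matrix.mul_kronecker_mul, ← Matrix.mul_kronecker_mul]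
    simp only [Matrix.one_mul, Matrix.mul_one]
    rw [hMMK, Matrix.kronecker_smul]
  -- factorizations
  have hAfact : calA = P1 * (Qk * DA * Qk⁻¹) := by rw [hDAdef, key, hcalA]
  have hPfact : calP = P1 * (Qk * DL * Qk⁻¹) := by rw [hDLdef, key, hcalP]
  have hQkQk : Qk⁻¹ * Qk = 1 := Matrix.nonsing_inv_mul Qk hQkd
  have hP1P1 : P1⁻¹ * P1 = 1 := Matrix.nonsing_inv_mul P1 hP1d
  have hPu : IsUnit calP := by
    rw [hPfact]
    exact hP1u.mul ((hQku.mul hX).mul (Matrix.isUnit_nonsing_inv_iff.mpr hQku))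
  refine ⟨hPu, ?_⟩
  have hPinv : calP⁻¹ = Qk * DL⁻¹ * Qk⁻¹ * P1⁻¹ := by
    rw [hPfact, Matrix.mul_inv_rev, Matrix.mul_inv_rev, Matrix.mul_inv_rev,
      Matrix.nonsing_inv_nonsing_inv Qk hQkd]
    noncomm_ring
  rw [hPinv, hAfact]
  calc Qk * DL⁻¹ * Qk⁻¹ * P1⁻¹ * (P1 * (Qk * DA * Qk⁻¹))
      = Qk * DL⁻¹ * ((Qk⁻¹ * (P1⁻¹ * P1)) * Qk) * DA * Qk⁻¹ := by noncomm_ring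
    _ = Qk * (DL⁻¹ * DA) * Qk⁻¹ := by
        rw [hP1P1, Matrix.mul_one, hQkQk]; noncomm_ring
end

section
/- Let μ ∈ ℝ, λ ∈ ℝ, let q ∈ ℝⁿ satisfy the generalized eigenvector equation τ K q = μ M q, and let σ ∈ ℝ^s satisfy (A⁻¹ + μ I_s) σ = λ (L + μ I_s) σ. Then the Kronecker-product vector σ ⊗ q satisfies 𝒜 (σ ⊗ q) = λ · 𝒫 (σ ⊗ q). In particular, if 𝒫 is invertible and σ ⊗ q ≠ 0, then (λ, σ ⊗ q) is an eigenpair of the preconditioned matrix 𝒫⁻¹𝒜. -/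
open Matrix Kronecker

lemma kron_mulVec_aux {s n : ℕ} (B : Matrix (Fin s) (Fin s) ℝ)
    (C : Matrix (Fin n) (Fin n) ℝ) (σ : Fin s → ℝ) (q : Fin n → ℝ) :
    (B ⊗ₖ C) *ᵥ (fun ip : Fin s × Fin n => σ ip.1 * q ip.2)
      = fun ip : Fin s × Fin n => (B *ᵥ σ) ip.1 * (C *ᵥ q) ip.2 := by
  funext ip
  simp only [mulVec, dotProduct, Fintype.sum_prod_type, kroneckerMap_apply]
  rw [Finset.sum_mul_sum]
  apply Finset.sum_congr rfl
  intro j _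
  apply Finset.sum_congr rfl
  intro r _
  ring


open Matrix Kronecker

/-- If `τ K q = μ M q` and `(A⁻¹ + μ I_s) σ = λ (L + μ I_s) σ`, then
the Kronecker vector `σ ⊗ q` satisfies `𝒜 (σ ⊗ q) = λ 𝒫 (σ ⊗ q)`; in particular,
if `𝒫` is invertible and `σ ⊗ q ≠ 0`, then `(λ, σ ⊗ q)` is an eigenpair of
`𝒫⁻¹𝒜`. -/
theorem kronecker_eigenvector_of_preconditioned
    (n s : ℕ) (hn : 0 < n) (hs : 0 < s)
    (M K : Matrix (Fin n) (Fin n) ℝ) (τ : ℝ)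
    (L A : Matrix (Fin s) (Fin s) ℝ) (hL : IsUnit L) (hA : IsUnit A)
    (calA calP : Matrix (Fin s × Fin n) (Fin s × Fin n) ℝ)
    (hcalA : calA = A⁻¹ ⊗ₖ M + τ • ((1 : Matrix (Fin s) (Fin s) ℝ) ⊗ₖ K))
    (hcalP : calP = L ⊗ₖ M + τ • ((1 : Matrix (Fin s) (Fin s) ℝ) ⊗ₖ K))
    (μ lam : ℝ) (q : Fin n → ℝ) (σ : Fin s → ℝ)
    (hq : τ • (K *ᵥ q) = μ • (M *ᵥ q))
    (hσ : (A⁻¹ + μ • (1 : Matrix (Fin s) (Fin s) ℝ)) *ᵥ σ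
        = lam • ((L + μ • (1 : Matrix (Fin s) (Fin s) ℝ)) *ᵥ σ)) :
    calA *ᵥ (fun ip : Fin s × Fin n => σ ip.1 * q ip.2)
        = lam • (calP *ᵥ (fun ip : Fin s × Fin n => σ ip.1 * q ip.2)) ∧
    (IsUnit calP → (fun ip : Fin s × Fin n => σ ip.1 * q ip.2) ≠ 0 →
      Module.End.HasEigenvector (calP⁻¹ * calA).mulVecLin lam
        (fun ip : Fin s × Fin n => σ ip.1 * q ip.2)) := by
  have hq' : ∀ p, τ * (K *ᵥ q) p = μ * (M *ᵥ q) p := by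
    intro p
    have := congrFun hq p
    simpa using this
  have hσ' : ∀ i, (A⁻¹ *ᵥ σ) i + μ * σ i = lam * ((L *ᵥ σ) i + μ * σ i) := by
    intro i
    have := congrFun hσ i
    simpa [add_mulVec, smul_mulVec, one_mulVec, mul_add] using this
  have hmain : calA *ᵥ (fun ip : Fin s × Fin n => σ ip.1 * q ip.2)
      = lam • (calP *ᵥ (fun ip : Fin s × Fin n => σ ip.1 * q ip.2)) := by
    subst hcalA hcalP
    funext ip
    simp only [add_mulVec, smul_mulVec, kron_mulVec_aux, one_mulVec,
      Pi.add_apply, Pi.smul_apply, smul_eq_mul]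
    linear_combination (M *ᵥ q) ip.2 * hσ' ip.1
      + (σ ip.1 - lam * σ ip.1) * hq' ip.2
  refine ⟨hmain, fun hP hv => ?_⟩
  refine ⟨?_, hv⟩
  rw [Module.End.mem_eigenspace_iff]
  have hdet : IsUnit calP.det := (Matrix.isUnit_iff_isUnit_det calP).mp hP
  simp only [mulVecLin_apply]
  rw [← mulVec_mulVec, hmain, mulVec_smul, mulVec_mulVec,
    Matrix.nonsing_inv_mul _ hdet, one_mulVec]
end

section
/- Assume τ M⁻¹K = Q D Q⁻¹ where Q ∈ ℝ^{n×n} is invertible and D = diag(μ₁, …, μ_n), and assume L + μ_k I_s is invertible for every k. Then the characteristic polynomial of the preconditioned matrix factors over the eigenvalues of τ M⁻¹K: charpoly(𝒫⁻¹𝒜) = ∏_{k=1}^{n} charpoly(X_{μ_k}), where X_μ := (L + μ I_s)⁻¹ (A⁻¹ + μ I_s) ∈ ℝ^{s×s}. -/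
open Matrix Kronecker Polynomial

private lemma charpoly_conj_units {m : Type*} [DecidableEq m] [Fintype m]
    (P B : Matrix m m ℝ) (hP : IsUnit P) :
    (P * B * P⁻¹).charpoly = B.charpoly := by
  have hPd : IsUnit P.det := (Matrix.isUnit_iff_isUnit_det P).mp hP
  have hPP : P * P⁻¹ = 1 := Matrix.mul_nonsing_inv P hPd
  have hmap : P.map (C : ℝ →+* ℝ[X]) * (P⁻¹).map C = 1 := by
    rw [← Matrix.map_mul, hPP]
    simp
  have hchar : Matrix.charmatrix (P * B * P⁻¹)
      = P.map C * Matrix.charmatrix B * (P⁻¹).map C := by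
    unfold Matrix.charmatrix
    rw [Matrix.mul_sub, Matrix.sub_mul]
    congr 1
    · rw [Matrix.mul_assoc, (Matrix.scalar_commute (X : ℝ[X])
        (fun r => Commute.all _ _) ((P⁻¹).map C)).eq, ← Matrix.mul_assoc, hmap,
        Matrix.one_mul]
    · simp [Matrix.map_mul, Matrix.mul_assoc]
  unfold Matrix.charpoly
  rw [hchar, Matrix.det_mul, Matrix.det_mul]
  have : (P.map (C : ℝ →+* ℝ[X])).det * ((P⁻¹).map C).det = 1 := by
    rw [← Matrix.det_mul, hmap, Matrix.det_one]
  calc (P.map (C : ℝ →+* ℝ[X])).det * (Matrix.charmatrix B).det * ((P⁻¹).map C).det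
      = (P.map (C : ℝ →+* ℝ[X])).det * ((P⁻¹).map C).det * (Matrix.charmatrix B).det := by
        ring
    _ = (Matrix.charmatrix B).det := by rw [this, one_mul]

private lemma charpoly_blockDiagonal {m o : Type*} [DecidableEq m] [Fintype m]
    [DecidableEq o] [Fintype o] (f : o → Matrix m m ℝ) :
    (Matrix.blockDiagonal f).charpoly = ∏ k, (f k).charpoly := by
  unfold Matrix.charpoly
  rw [← Matrix.det_blockDiagonal]
  congr 1
  ext ⟨i, k⟩ ⟨j, k'⟩
  by_cases h : k = k'
  · subst h
    by_cases hij : i = j <;>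
      simp [Matrix.charmatrix_apply, Matrix.blockDiagonal_apply, Matrix.one_apply,
        Prod.ext_iff, hij]
  · simp [Matrix.charmatrix_apply, Matrix.blockDiagonal_apply, Matrix.one_apply,
      Prod.ext_iff, h]

/-- If `τ M⁻¹K = Q D Q⁻¹` with `Q` invertible and
`D = diag(μ₁,…,μ_n)`, and `L + μ_k I_s` is invertible for every `k`, then
`charpoly(𝒫⁻¹𝒜) = ∏_{k=1}^n charpoly(X_{μ_k})` with
`X_μ := (L + μ I_s)⁻¹ (A⁻¹ + μ I_s)`. -/
theorem charpoly_preconditioned_factors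
    (n s : ℕ) (hn : 0 < n) (hs : 0 < s)
    (M K : Matrix (Fin n) (Fin n) ℝ) (hM : IsUnit M) (τ : ℝ)
    (L A : Matrix (Fin s) (Fin s) ℝ) (hL : IsUnit L) (hA : IsUnit A)
    (Q : Matrix (Fin n) (Fin n) ℝ) (hQ : IsUnit Q)
    (μ : Fin n → ℝ)
    (hdiag : τ • (M⁻¹ * K) = Q * Matrix.diagonal μ * Q⁻¹)
    (hk : ∀ k : Fin n, IsUnit (L + μ k • (1 : Matrix (Fin s) (Fin s) ℝ)))
    (calA calP : Matrix (Fin s × Fin n) (Fin s × Fin n) ℝ)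
    (hcalA : calA = A⁻¹ ⊗ₖ M + τ • ((1 : Matrix (Fin s) (Fin s) ℝ) ⊗ₖ K))
    (hcalP : calP = L ⊗ₖ M + τ • ((1 : Matrix (Fin s) (Fin s) ℝ) ⊗ₖ K))
    (hP : IsUnit calP) :
    (calP⁻¹ * calA).charpoly
      = ∏ k : Fin n,
          ((L + μ k • (1 : Matrix (Fin s) (Fin s) ℝ))⁻¹
            * (A⁻¹ + μ k • (1 : Matrix (Fin s) (Fin s) ℝ))).charpoly := by
  have hMd : IsUnit M.det := (Matrix.isUnit_iff_isUnit_det M).mp hM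
  have hQd : IsUnit Q.det := (Matrix.isUnit_iff_isUnit_det Q).mp hQ
  set D := Matrix.diagonal μ with hD
  set bdL := Matrix.blockDiagonal
    (fun k => L + μ k • (1 : Matrix (Fin s) (Fin s) ℝ)) with hbdLdef
  set bdA := Matrix.blockDiagonal
    (fun k => A⁻¹ + μ k • (1 : Matrix (Fin s) (Fin s) ℝ)) with hbdAdef
  -- identify Kronecker sums with block diagonal matrices
  have hbd : ∀ Z : Matrix (Fin s) (Fin s) ℝ,
      Z ⊗ₖ (1 : Matrix (Fin n) (Fin n) ℝ)
        + (1 : Matrix (Fin s) (Fin s) ℝ) ⊗ₖ D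
      = Matrix.blockDiagonal
          (fun k => Z + μ k • (1 : Matrix (Fin s) (Fin s) ℝ)) := by
    intro Z
    ext ⟨i, k⟩ ⟨j, k'⟩
    by_cases h : k = k'
    · subst h
      by_cases hij : i = j <;>
        simp [Matrix.blockDiagonal_apply, Matrix.one_apply, Matrix.diagonal_apply, hij, hD]
    · simp [Matrix.blockDiagonal_apply, Matrix.one_apply, Matrix.diagonal_apply, h, hD]
  -- basic Kronecker cancellations
  have hQQ : (1 : Matrix (Fin s) (Fin s) ℝ) ⊗ₖ Q
      * ((1 : Matrix (Fin s) (Fin s) ℝ) ⊗ₖ Q⁻¹) = 1 := by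
    rw [← Matrix.mul_kronecker_mul, Matrix.mul_one, Matrix.mul_nonsing_inv Q hQd,
      Matrix.one_kronecker_one]
  have hQQ' : (1 : Matrix (Fin s) (Fin s) ℝ) ⊗ₖ Q⁻¹
      * ((1 : Matrix (Fin s) (Fin s) ℝ) ⊗ₖ Q) = 1 := by
    rw [← Matrix.mul_kronecker_mul, Matrix.mul_one, Matrix.nonsing_inv_mul Q hQd,
      Matrix.one_kronecker_one]
  have hMM' : (1 : Matrix (Fin s) (Fin s) ℝ) ⊗ₖ M⁻¹
      * ((1 : Matrix (Fin s) (Fin s) ℝ) ⊗ₖ M) = 1 := by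
    rw [← Matrix.mul_kronecker_mul, Matrix.mul_one, Matrix.nonsing_inv_mul M hMd,
      Matrix.one_kronecker_one]
  have hinvQ : ((1 : Matrix (Fin s) (Fin s) ℝ) ⊗ₖ Q)⁻¹
      = (1 : Matrix (Fin s) (Fin s) ℝ) ⊗ₖ Q⁻¹ := Matrix.inv_eq_right_inv hQQ
  have hinvQ' : ((1 : Matrix (Fin s) (Fin s) ℝ) ⊗ₖ Q⁻¹)⁻¹
      = (1 : Matrix (Fin s) (Fin s) ℝ) ⊗ₖ Q := Matrix.inv_eq_right_inv hQQ'
  have hinvM : ((1 : Matrix (Fin s) (Fin s) ℝ) ⊗ₖ M)⁻¹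
      = (1 : Matrix (Fin s) (Fin s) ℝ) ⊗ₖ M⁻¹ := by
    refine Matrix.inv_eq_right_inv ?_
    rw [← Matrix.mul_kronecker_mul, Matrix.mul_one, Matrix.mul_nonsing_inv M hMd,
      Matrix.one_kronecker_one]
  have hUQ : IsUnit ((1 : Matrix (Fin s) (Fin s) ℝ) ⊗ₖ Q) := by
    rw [Matrix.isUnit_iff_isUnit_det]
    refine IsUnit.of_mul_eq_one (((1 : Matrix (Fin s) (Fin s) ℝ) ⊗ₖ Q⁻¹).det) ?_
    rw [← Matrix.det_mul, hQQ, Matrix.det_one]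
  -- key conjugation identity
  have key : ∀ Z : Matrix (Fin s) (Fin s) ℝ,
      (1 : Matrix (Fin s) (Fin s) ℝ) ⊗ₖ Q
        * Matrix.blockDiagonal (fun k => Z + μ k • (1 : Matrix (Fin s) (Fin s) ℝ))
        * ((1 : Matrix (Fin s) (Fin s) ℝ) ⊗ₖ Q⁻¹)
      = Z ⊗ₖ (1 : Matrix (Fin n) (Fin n) ℝ)
        + (1 : Matrix (Fin s) (Fin s) ℝ) ⊗ₖ (τ • (M⁻¹ * K)) := by
    intro Z
    rw [← hbd, hdiag, Matrix.mul_add, Matrix.add_mul]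
    congr 1
    · rw [← Matrix.mul_kronecker_mul, ← Matrix.mul_kronecker_mul]
      simp [Matrix.mul_nonsing_inv Q hQd]
    · rw [← Matrix.mul_kronecker_mul, ← Matrix.mul_kronecker_mul]
      simp [Matrix.mul_assoc]
  -- factorizations of calA and calP
  have hdecomp : ∀ Z : Matrix (Fin s) (Fin s) ℝ,
      Z ⊗ₖ M + τ • ((1 : Matrix (Fin s) (Fin s) ℝ) ⊗ₖ K)
      = (1 : Matrix (Fin s) (Fin s) ℝ) ⊗ₖ M
        * ((1 : Matrix (Fin s) (Fin s) ℝ) ⊗ₖ Q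
          * Matrix.blockDiagonal (fun k => Z + μ k • (1 : Matrix (Fin s) (Fin s) ℝ))
          * ((1 : Matrix (Fin s) (Fin s) ℝ) ⊗ₖ Q⁻¹)) := by
    intro Z
    rw [key Z, Matrix.mul_add, ← Matrix.mul_kronecker_mul, ← Matrix.mul_kronecker_mul,
      Matrix.one_mul, Matrix.mul_one, Matrix.mul_one]
    congr 1
    rw [mul_smul_comm, ← Matrix.mul_assoc, Matrix.mul_nonsing_inv M hMd,
      Matrix.one_mul, Matrix.kronecker_smul]
  have hcalA' : calA = (1 : Matrix (Fin s) (Fin s) ℝ) ⊗ₖ M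
      * ((1 : Matrix (Fin s) (Fin s) ℝ) ⊗ₖ Q * bdA
        * ((1 : Matrix (Fin s) (Fin s) ℝ) ⊗ₖ Q⁻¹)) := by
    rw [hcalA, hdecomp A⁻¹, hbdAdef]
  have hcalP' : calP = (1 : Matrix (Fin s) (Fin s) ℝ) ⊗ₖ M
      * ((1 : Matrix (Fin s) (Fin s) ℝ) ⊗ₖ Q * bdL
        * ((1 : Matrix (Fin s) (Fin s) ℝ) ⊗ₖ Q⁻¹)) := by
    rw [hcalP, hdecomp L, hbdLdef]
  -- block diagonal inverse
  have hbdLinv : bdL⁻¹ = Matrix.blockDiagonal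
      (fun k => (L + μ k • (1 : Matrix (Fin s) (Fin s) ℝ))⁻¹) := by
    refine Matrix.inv_eq_right_inv ?_
    rw [hbdLdef, ← Matrix.blockDiagonal_mul]
    have heq : (fun k => (L + μ k • (1 : Matrix (Fin s) (Fin s) ℝ))
        * (L + μ k • (1 : Matrix (Fin s) (Fin s) ℝ))⁻¹)
        = fun _ => (1 : Matrix (Fin s) (Fin s) ℝ) :=
      funext fun k =>
        Matrix.mul_nonsing_inv _ ((Matrix.isUnit_iff_isUnit_det _).mp (hk k))
    rw [heq]
    exact Matrix.blockDiagonal_one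
  -- main computation
  have hmain : calP⁻¹ * calA
      = (1 : Matrix (Fin s) (Fin s) ℝ) ⊗ₖ Q * (bdL⁻¹ * bdA)
        * ((1 : Matrix (Fin s) (Fin s) ℝ) ⊗ₖ Q)⁻¹ := by
    rw [hcalP', hcalA', Matrix.mul_inv_rev, Matrix.mul_inv_rev, Matrix.mul_inv_rev,
      hinvQ', hinvQ, hinvM]
    have cM : ∀ X : Matrix (Fin s × Fin n) (Fin s × Fin n) ℝ,
        (1 : Matrix (Fin s) (Fin s) ℝ) ⊗ₖ M⁻¹
          * ((1 : Matrix (Fin s) (Fin s) ℝ) ⊗ₖ M * X) = X := fun X => by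
      rw [← Matrix.mul_assoc, hMM', Matrix.one_mul]
    have cQ : ∀ X : Matrix (Fin s × Fin n) (Fin s × Fin n) ℝ,
        (1 : Matrix (Fin s) (Fin s) ℝ) ⊗ₖ Q⁻¹
          * ((1 : Matrix (Fin s) (Fin s) ℝ) ⊗ₖ Q * X) = X := fun X => by
      rw [← Matrix.mul_assoc, hQQ', Matrix.one_mul]
    simp only [Matrix.mul_assoc]
    rw [cM, cQ]
  rw [hmain, charpoly_conj_units _ _ hUQ, hbdLinv, ← Matrix.blockDiagonal_mul,
    charpoly_blockDiagonal]
end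

section
/- Let μ ∈ ℝ be such that L + μ I_s is invertible, and set X_μ := (L + μ I_s)⁻¹ (A⁻¹ + μ I_s). Then for every λ ∈ ℝ, det(λ I_s − X_μ) = det((λ−1) I_s − (I_s + μ L⁻¹)⁻¹ Û), i.e., the characteristic polynomial of X_μ equals the characteristic polynomial of (I_s + μ L⁻¹)⁻¹ Û shifted by 1. -/
open Matrix

/-- If `L + μ I_s` is invertible and
`X_μ := (L + μ I_s)⁻¹ (A⁻¹ + μ I_s)`, then for every `λ`,
`det(λ I_s − X_μ) = det((λ−1) I_s − (I_s + μ L⁻¹)⁻¹ Û)`. -/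
theorem charpoly_X_mu_shift
    (s : ℕ) (hs : 0 < s)
    (L Uhat A : Matrix (Fin s) (Fin s) ℝ)
    (hL : IsUnit L) (hA : IsUnit A)
    (hUhat : ∀ i j : Fin s, j ≤ i → Uhat i j = 0)
    (hAinv : A⁻¹ = L * (1 + Uhat))
    (μ : ℝ) (hμ : IsUnit (L + μ • (1 : Matrix (Fin s) (Fin s) ℝ))) :
    ∀ lam : ℝ,
      (lam • (1 : Matrix (Fin s) (Fin s) ℝ)
          - (L + μ • (1 : Matrix (Fin s) (Fin s) ℝ))⁻¹
              * (A⁻¹ + μ • (1 : Matrix (Fin s) (Fin s) ℝ))).det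
        = ((lam - 1) • (1 : Matrix (Fin s) (Fin s) ℝ)
            - ((1 : Matrix (Fin s) (Fin s) ℝ) + μ • L⁻¹)⁻¹ * Uhat).det := by
  intro lam
  set N : Matrix (Fin s) (Fin s) ℝ := 1 + μ • L⁻¹ with hN
  have hfac : L * N = L + μ • (1 : Matrix (Fin s) (Fin s) ℝ) := by
    rw [hN, mul_add, mul_one, Matrix.mul_smul, Matrix.mul_nonsing_inv _ ((Matrix.isUnit_iff_isUnit_det _).mp hL)]
  have hμ' : IsUnit (L * N) := hfac ▸ hμ
  have hNunit : IsUnit N := by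
    have := (Matrix.isUnit_iff_isUnit_det _).mp hμ'
    rw [Matrix.det_mul] at this
    exact (Matrix.isUnit_iff_isUnit_det _).mpr (isUnit_of_mul_isUnit_right this)
  have hinv : (L + μ • (1 : Matrix (Fin s) (Fin s) ℝ))⁻¹ = N⁻¹ * L⁻¹ := by
    rw [← hfac, Matrix.mul_inv_rev]
  have hsum : A⁻¹ + μ • (1 : Matrix (Fin s) (Fin s) ℝ)
      = (L + μ • (1 : Matrix (Fin s) (Fin s) ℝ)) + L * Uhat := by
    rw [hAinv, mul_add, mul_one]; abel
  congr 1
  have hNL : N⁻¹ * L⁻¹ * (L * Uhat) = N⁻¹ * Uhat := by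
    rw [mul_assoc, ← mul_assoc L⁻¹,
      Matrix.nonsing_inv_mul _ ((Matrix.isUnit_iff_isUnit_det _).mp hL), one_mul]
  rw [hsum, mul_add, Matrix.nonsing_inv_mul _ ((Matrix.isUnit_iff_isUnit_det _).mp hμ),
    hinv, hNL, sub_smul, one_smul]
  abel
end

section
/- Let μ ∈ ℝ be such that L + μ I_s is invertible, and set X_μ := (L + μ I_s)⁻¹ (A⁻¹ + μ I_s). Then for every λ ∈ ℝ and every σ ∈ ℝ^s, the generalized eigenvalue equation Û σ = λ (I_s + μ L⁻¹) σ holds if and only if X_μ σ = (1+λ) σ. In particular, (λ, σ) is a generalized eigenpair of the scalar pencil Û − λ(I_s + μ L⁻¹) exactly when (1+λ, σ) is an eigenpair of X_μ; this identifies the s×s eigenproblems arising in the polynomial approach with those of the matrix approach. -/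
open Matrix

/-- If `L + μ I_s` is invertible and
`X_μ := (L + μ I_s)⁻¹ (A⁻¹ + μ I_s)`, then for every `λ ∈ ℝ` and `σ ∈ ℝ^s`,
`Û σ = λ (I_s + μ L⁻¹) σ` if and only if `X_μ σ = (1+λ) σ`. -/
theorem scalar_pencil_iff_X_mu_eigen
    (s : ℕ) (hs : 0 < s)
    (L Uhat A : Matrix (Fin s) (Fin s) ℝ)
    (hL : IsUnit L) (hA : IsUnit A)
    (hUhat : ∀ i j : Fin s, j ≤ i → Uhat i j = 0)
    (hAinv : A⁻¹ = L * (1 + Uhat))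
    (μ : ℝ) (hμ : IsUnit (L + μ • (1 : Matrix (Fin s) (Fin s) ℝ))) :
    ∀ (lam : ℝ) (σ : Fin s → ℝ),
      Uhat *ᵥ σ = lam • (((1 : Matrix (Fin s) (Fin s) ℝ) + μ • L⁻¹) *ᵥ σ)
        ↔ ((L + μ • (1 : Matrix (Fin s) (Fin s) ℝ))⁻¹
            * (A⁻¹ + μ • (1 : Matrix (Fin s) (Fin s) ℝ))) *ᵥ σ = (1 + lam) • σ := by
  intro lam σ
  set M : Matrix (Fin s) (Fin s) ℝ := L + μ • 1 with hMdef
  have hLd : IsUnit L.det := (isUnit_iff_isUnit_det L).mp hL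
  have hMd : IsUnit M.det := (isUnit_iff_isUnit_det M).mp hμ
  have hLinv : L * L⁻¹ = 1 := Matrix.mul_nonsing_inv L hLd
  have hMinv : M * M⁻¹ = 1 := Matrix.mul_nonsing_inv M hMd
  have hinvM : M⁻¹ * M = 1 := Matrix.nonsing_inv_mul M hMd
  have hsum : A⁻¹ + μ • (1 : Matrix (Fin s) (Fin s) ℝ) = M + L * Uhat := by
    rw [hAinv, mul_add, mul_one, hMdef]; abel
  have hMσ : M *ᵥ σ = L *ᵥ σ + μ • σ := by
    rw [hMdef, add_mulVec, smul_mulVec, one_mulVec]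
  have cancelM : ∀ x : Fin s → ℝ, M *ᵥ (M⁻¹ *ᵥ x) = x := by
    intro x; rw [mulVec_mulVec, hMinv, one_mulVec]
  have cancelM' : ∀ x : Fin s → ℝ, M⁻¹ *ᵥ (M *ᵥ x) = x := by
    intro x; rw [mulVec_mulVec, hinvM, one_mulVec]
  have cancelL : ∀ x : Fin s → ℝ, L *ᵥ (L⁻¹ *ᵥ x) = x := by
    intro x; rw [mulVec_mulVec, hLinv, one_mulVec]
  have cancelL' : ∀ x : Fin s → ℝ, L⁻¹ *ᵥ (L *ᵥ x) = x := by
    intro x; rw [mulVec_mulVec, Matrix.nonsing_inv_mul L hLd, one_mulVec]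
  -- RHS rewrite
  have hX : (M⁻¹ * (A⁻¹ + μ • 1)) *ᵥ σ = σ + M⁻¹ *ᵥ (L *ᵥ (Uhat *ᵥ σ)) := by
    rw [hsum, mul_add, hinvM, add_mulVec, one_mulVec, ← Matrix.mul_assoc,
      ← mulVec_mulVec, ← mulVec_mulVec]
  have step1 : ((M⁻¹ * (A⁻¹ + μ • 1)) *ᵥ σ = (1 + lam) • σ)
      ↔ M⁻¹ *ᵥ (L *ᵥ (Uhat *ᵥ σ)) = lam • σ := by
    rw [hX, add_smul, one_smul, add_right_inj]
  have step2 : (M⁻¹ *ᵥ (L *ᵥ (Uhat *ᵥ σ)) = lam • σ)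
      ↔ L *ᵥ (Uhat *ᵥ σ) = lam • (M *ᵥ σ) := by
    constructor
    · intro h
      have h2 := congrArg (M *ᵥ ·) h
      simp only [cancelM] at h2
      rw [h2, mulVec_smul]
    · intro h
      rw [h, mulVec_smul, cancelM']
  have step3 : (Uhat *ᵥ σ = lam • (((1 : Matrix (Fin s) (Fin s) ℝ) + μ • L⁻¹) *ᵥ σ))
      ↔ L *ᵥ (Uhat *ᵥ σ) = lam • (M *ᵥ σ) := by
    have hrhs : L *ᵥ (lam • (((1 : Matrix (Fin s) (Fin s) ℝ) + μ • L⁻¹) *ᵥ σ))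
        = lam • (M *ᵥ σ) := by
      rw [mulVec_smul, add_mulVec, one_mulVec, smul_mulVec, mulVec_add,
        mulVec_smul, cancelL, hMσ]
    constructor
    · intro h; rw [h, hrhs]
    · intro h
      have h2 := congrArg (L⁻¹ *ᵥ ·) (h.trans hrhs.symm)
      simp only [cancelL'] at h2
      exact h2
  rw [step3, step1, step2]
end

section
/- Assume 𝒫 is invertible. Then 1 is an eigenvalue of the preconditioned matrix 𝒫⁻¹𝒜 with geometric multiplicity at least n; that is, the kernel of 𝒫⁻¹𝒜 − I_{sn} has dimension at least n. -/
open Matrix Kronecker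

/-- If `𝒫` is invertible, then `1` is an eigenvalue of `𝒫⁻¹𝒜`
with geometric multiplicity at least `n`: the kernel of `𝒫⁻¹𝒜 − I_{sn}` has
dimension at least `n`. -/
theorem one_eigenvalue_multiplicity_n
    (n s : ℕ) (hn : 0 < n) (hs : 0 < s)
    (M K : Matrix (Fin n) (Fin n) ℝ) (hM : IsUnit M) (τ : ℝ)
    (L Uhat A : Matrix (Fin s) (Fin s) ℝ)
    (hL : IsUnit L) (hA : IsUnit A)
    (hUhat : ∀ i j : Fin s, j ≤ i → Uhat i j = 0)
    (hAinv : A⁻¹ = L * (1 + Uhat))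
    (calA calP : Matrix (Fin s × Fin n) (Fin s × Fin n) ℝ)
    (hcalA : calA = A⁻¹ ⊗ₖ M + τ • ((1 : Matrix (Fin s) (Fin s) ℝ) ⊗ₖ K))
    (hcalP : calP = L ⊗ₖ M + τ • ((1 : Matrix (Fin s) (Fin s) ℝ) ⊗ₖ K))
    (hP : IsUnit calP) :
    n ≤ Module.finrank ℝ
        (LinearMap.ker (calP⁻¹ * calA
          - (1 : Matrix (Fin s × Fin n) (Fin s × Fin n) ℝ)).mulVecLin) := by
  set z : Fin s := ⟨0, hs⟩ with hz
  -- calA = calP + (L * Uhat) ⊗ₖ M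
  have hdecomp : calA = calP + (L * Uhat) ⊗ₖ M := by
    rw [hcalA, hcalP, hAinv, mul_add, mul_one, add_kronecker]
    abel
  have hPdet : IsUnit calP.det := (Matrix.isUnit_iff_isUnit_det _).mp hP
  have hD : calP⁻¹ * calA - 1 = calP⁻¹ * ((L * Uhat) ⊗ₖ M) := by
    rw [hdecomp, mul_add, Matrix.nonsing_inv_mul _ hPdet]
    abel
  -- the inclusion of ℝⁿ as the first block
  let f : (Fin n → ℝ) →ₗ[ℝ] (Fin s × Fin n → ℝ) :=
    { toFun := fun w p => if p.1 = z then w p.2 else 0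
      map_add' := by
        intro w v; funext p; by_cases h : p.1 = z <;> simp [h]
      map_smul' := by
        intro c w; funext p; by_cases h : p.1 = z <;> simp [h] }
  have hcol : ∀ i : Fin s, (L * Uhat) i z = 0 := by
    intro i
    simp only [Matrix.mul_apply]
    refine Finset.sum_eq_zero fun m _ => ?_
    rw [hUhat m z (by exact Fin.mk_le_of_le_val (Nat.zero_le _)), mul_zero]
  have hker : ∀ w : Fin n → ℝ,
      f w ∈ LinearMap.ker (calP⁻¹ * calA - 1).mulVecLin := by
    intro w
    rw [LinearMap.mem_ker, Matrix.mulVecLin_apply, hD, ← Matrix.mulVec_mulVec]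
    have h0 : ((L * Uhat) ⊗ₖ M).mulVec (f w) = 0 := by
      funext p
      obtain ⟨i, k⟩ := p
      simp only [Matrix.mulVec, dotProduct, Pi.zero_apply]
      rw [Fintype.sum_prod_type]
      refine Finset.sum_eq_zero fun j _ => Finset.sum_eq_zero fun l _ => ?_
      by_cases h : j = z
      · subst h
        simp [f, kroneckerMap_apply, hcol i]
      · simp [f, h]
    rw [h0, Matrix.mulVec_zero]
  have hinj : Function.Injective f := by
    intro w v h
    funext l
    have := congrFun h (z, l)
    simpa [f] using this
  let g : (Fin n → ℝ) →ₗ[ℝ] LinearMap.ker (calP⁻¹ * calA - 1).mulVecLin :=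
    f.codRestrict _ hker
  have hginj : Function.Injective g := by
    intro w v h
    apply hinj
    exact congrArg Subtype.val h
  have := LinearMap.finrank_le_finrank_of_injective hginj
  simpa using this
end

section
/- Assume τ M⁻¹K = Q D Q⁻¹ where Q ∈ ℝ^{n×n} is invertible and D = diag(μ₁, …, μ_n). Then the characteristic polynomial of the pencil W₂ − λW₁ factors completely into the n scalar s×s pencils parametrized by the eigenvalues μ_k: for every λ ∈ ℝ, det(W₂ − λ W₁) = ∏_{k=1}^{n} det( Û − λ (I_s + μ_k L⁻¹) ). -/
open Matrix Kronecker

/-- If `τ M⁻¹K = Q D Q⁻¹` with `Q` invertible and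
`D = diag(μ₁,…,μ_n)`, then for every `λ ∈ ℝ`,
`det(W₂ − λ W₁) = ∏_{k=1}^n det(Û − λ (I_s + μ_k L⁻¹))`. -/
theorem det_pencil_factors_over_modes
    (n s : ℕ) (hn : 0 < n) (hs : 0 < s)
    (M K : Matrix (Fin n) (Fin n) ℝ) (hM : IsUnit M) (τ : ℝ)
    (L Uhat : Matrix (Fin s) (Fin s) ℝ)
    (hL : IsUnit L)
    (hUhat : ∀ i j : Fin s, j ≤ i → Uhat i j = 0)
    (Q : Matrix (Fin n) (Fin n) ℝ) (hQ : IsUnit Q)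
    (μ : Fin n → ℝ)
    (hdiag : τ • (M⁻¹ * K) = Q * Matrix.diagonal μ * Q⁻¹)
    (W₁ W₂ : Matrix (Fin s × Fin n) (Fin s × Fin n) ℝ)
    (hW₁ : W₁ = 1 + τ • (L⁻¹ ⊗ₖ (M⁻¹ * K)))
    (hW₂ : W₂ = Uhat ⊗ₖ (1 : Matrix (Fin n) (Fin n) ℝ)) :
    ∀ lam : ℝ,
      (W₂ - lam • W₁).det
        = ∏ k : Fin n,
            (Uhat - lam • ((1 : Matrix (Fin s) (Fin s) ℝ) + μ k • L⁻¹)).det := by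
  intro lam
  have hQQ : Q * Q⁻¹ = 1 := mul_nonsing_inv _ (isUnit_iff_isUnit_det Q |>.mp hQ)
  have hP : IsUnit ((1 : Matrix (Fin s) (Fin s) ℝ) ⊗ₖ Q) := by
    rw [isUnit_iff_isUnit_det, det_kronecker]
    simp only [det_one, one_pow, one_mul]
    exact (isUnit_iff_isUnit_det Q |>.mp hQ).pow _
  have hPinv : ((1 : Matrix (Fin s) (Fin s) ℝ) ⊗ₖ Q)⁻¹
      = (1 : Matrix (Fin s) (Fin s) ℝ)⁻¹ ⊗ₖ Q⁻¹ := inv_kronecker 1 Q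
  have key : W₂ - lam • W₁
      = ((1 : Matrix (Fin s) (Fin s) ℝ) ⊗ₖ Q)
        * Matrix.blockDiagonal
            (fun k => Uhat - lam • ((1 : Matrix (Fin s) (Fin s) ℝ) + μ k • L⁻¹))
        * ((1 : Matrix (Fin s) (Fin s) ℝ) ⊗ₖ Q)⁻¹ := by
    have hbd : Matrix.blockDiagonal
          (fun k => Uhat - lam • ((1 : Matrix (Fin s) (Fin s) ℝ) + μ k • L⁻¹))
        = Uhat ⊗ₖ (1 : Matrix (Fin n) (Fin n) ℝ)
          - lam • ((1 : Matrix (Fin s × Fin n) (Fin s × Fin n) ℝ)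
              + L⁻¹ ⊗ₖ Matrix.diagonal μ) := by
      ext ⟨i, k⟩ ⟨j, l⟩
      simp only [Matrix.blockDiagonal_apply, Matrix.sub_apply, Matrix.add_apply,
        Matrix.smul_apply, Matrix.kroneckerMap_apply, Matrix.one_apply,
        Matrix.diagonal_apply, Prod.mk.injEq, smul_eq_mul]
      by_cases hkl : k = l <;> by_cases hij : i = j <;>
        simp [hkl, hij] <;> first | exact Or.inl (mul_comm _ _) | tauto | ring1
    rw [hPinv, inv_one, hbd]
    rw [hW₁, hW₂, ← kronecker_smul, hdiag]
    simp only [mul_sub, sub_mul, mul_add, add_mul, mul_one, one_mul,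
      Matrix.mul_smul, Matrix.smul_mul]
    rw [← mul_kronecker_mul, ← mul_kronecker_mul, ← mul_kronecker_mul,
      ← mul_kronecker_mul]
    simp [hQQ, Matrix.mul_assoc, smul_add]
    rw [← mul_kronecker_mul, Matrix.mul_one, Matrix.mul_assoc]
  rw [key, Matrix.det_conj hP, Matrix.det_blockDiagonal]
end

section
/- Write ℓ_{ij} for the entries of L⁻¹ and suppose I_n + ℓ_{ss} τ M⁻¹K is invertible. Let λ ∈ ℝ with λ ≠ 0 and let v ∈ ℝ^{sn}, partitioned into blocks v₁, …, v_s ∈ ℝⁿ, satisfy the generalized eigenvalue equation W₂ v = λ W₁ v. Then the last block is determined by the preceding blocks independently of λ: v_s = −(I_n + ℓ_{ss} τ M⁻¹K)⁻¹ ∑_{j=1}^{s−1} ℓ_{sj} τ (M⁻¹K) v_j. -/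
open Matrix Kronecker

/-- Suppose `I_n + ℓ_{ss} τ M⁻¹K` is invertible, `λ ≠ 0`, and the
block vector `v` satisfies `W₂ v = λ W₁ v`. Then the last block of `v` is
determined by the preceding blocks independently of `λ`:
`v_s = −(I_n + ℓ_{ss} τ M⁻¹K)⁻¹ ∑_{j<s} ℓ_{sj} τ (M⁻¹K) v_j`. -/
theorem last_block_backsubstitution
    (n s : ℕ) (hn : 0 < n) (hs : 0 < s)
    (M K : Matrix (Fin n) (Fin n) ℝ) (hM : IsUnit M) (τ : ℝ)
    (L Uhat : Matrix (Fin s) (Fin s) ℝ)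
    (hL : IsUnit L)
    (hLlower : ∀ i j : Fin s, i < j → L i j = 0)
    (hUhat : ∀ i j : Fin s, j ≤ i → Uhat i j = 0)
    (hss : IsUnit ((1 : Matrix (Fin n) (Fin n) ℝ)
        + (L⁻¹ ⟨s - 1, by omega⟩ ⟨s - 1, by omega⟩ * τ) • (M⁻¹ * K)))
    (lam : ℝ) (hlam : lam ≠ 0)
    (v : Fin s × Fin n → ℝ)
    (hv : (Uhat ⊗ₖ (1 : Matrix (Fin n) (Fin n) ℝ)) *ᵥ v
        = lam • (((1 : Matrix (Fin s × Fin n) (Fin s × Fin n) ℝ)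
            + τ • (L⁻¹ ⊗ₖ (M⁻¹ * K))) *ᵥ v)) :
    (fun p : Fin n => v (⟨s - 1, by omega⟩, p))
      = -(((1 : Matrix (Fin n) (Fin n) ℝ)
            + (L⁻¹ ⟨s - 1, by omega⟩ ⟨s - 1, by omega⟩ * τ) • (M⁻¹ * K))⁻¹
          *ᵥ ∑ j ∈ Finset.univ.filter (fun j : Fin s => j < ⟨s - 1, by omega⟩),
              (L⁻¹ ⟨s - 1, by omega⟩ j * τ)
                • ((M⁻¹ * K) *ᵥ fun p : Fin n => v (j, p))) := by
  set i0 : Fin s := ⟨s - 1, by omega⟩ with hi0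
  have hle : ∀ j : Fin s, j ≤ i0 := by
    intro j; rcases j with ⟨j, hj⟩; simp [hi0, Fin.le_def]; omega
  set B : Matrix (Fin n) (Fin n) ℝ := M⁻¹ * K with hB
  set A : Matrix (Fin n) (Fin n) ℝ := 1 + (L⁻¹ i0 i0 * τ) • B with hA
  set S : Fin n → ℝ :=
    ∑ j ∈ Finset.univ.filter (fun j : Fin s => j < i0),
      (L⁻¹ i0 j * τ) • (B *ᵥ fun p : Fin n => v (j, p)) with hS
  -- pointwise equation at the last block
  have key : ∀ p : Fin n,
      v (i0, p) + τ * ∑ j : Fin s, ∑ q : Fin n, L⁻¹ i0 j * B p q * v (j, q) = 0 := by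
    intro p
    have h1 := congrFun hv (i0, p)
    have hlhs : ((Uhat ⊗ₖ (1 : Matrix (Fin n) (Fin n) ℝ)) *ᵥ v) (i0, p) = 0 := by
      simp only [Matrix.mulVec, dotProduct]
      apply Finset.sum_eq_zero
      rintro ⟨j, q⟩ -
      simp [Matrix.kroneckerMap_apply, hUhat _ _ (hle j)]
    have h2 : (((1 : Matrix (Fin s × Fin n) (Fin s × Fin n) ℝ)
        + τ • (L⁻¹ ⊗ₖ B)) *ᵥ v) (i0, p) = 0 := by
      have := h1
      rw [hlhs] at this
      have := this.symm
      rw [Pi.smul_apply] at this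
      exact (mul_eq_zero.mp this).resolve_left hlam
    rw [Matrix.add_mulVec, Matrix.one_mulVec, Matrix.smul_mulVec] at h2
    simp only [Pi.add_apply, Pi.smul_apply, smul_eq_mul, Matrix.mulVec,
      dotProduct] at h2
    rw [← h2]
    congr 1
    congr 1
    rw [Fintype.sum_prod_type]
    apply Finset.sum_congr rfl; rintro j -
    apply Finset.sum_congr rfl; rintro q -
    show L⁻¹ i0 j * B p q * v (j, q) = L⁻¹ i0 j * B p q * v (j, q)
    rfl
  have hfilter : Finset.univ.filter (fun j : Fin s => j < i0)
      = Finset.univ.erase i0 := by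
    ext j
    simp only [Finset.mem_filter, Finset.mem_univ, true_and, Finset.mem_erase,
      and_true]
    exact ⟨fun h => Fin.ne_of_lt h, fun h => lt_of_le_of_ne (hle j) h⟩
  have hAv : A *ᵥ (fun p => v (i0, p)) = -S := by
    funext p
    rw [hA, Matrix.add_mulVec, Matrix.one_mulVec, Matrix.smul_mulVec]
    simp only [Pi.add_apply, Pi.smul_apply, smul_eq_mul, Pi.neg_apply]
    have hk := key p
    have hsplit : ∑ j : Fin s, ∑ q : Fin n, L⁻¹ i0 j * B p q * v (j, q)
        = (∑ q : Fin n, L⁻¹ i0 i0 * B p q * v (i0, q))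
          + ∑ j ∈ Finset.univ.erase i0, ∑ q : Fin n, L⁻¹ i0 j * B p q * v (j, q) :=
      (Finset.add_sum_erase _ _ (Finset.mem_univ i0)).symm
    have hSp : S p = ∑ j ∈ Finset.univ.erase i0,
        ∑ q : Fin n, τ * (L⁻¹ i0 j * B p q * v (j, q)) := by
      rw [hS, ← hfilter, Finset.sum_apply]
      apply Finset.sum_congr rfl; rintro j -
      rw [Pi.smul_apply, smul_eq_mul, Matrix.mulVec, dotProduct,
        Finset.mul_sum]
      apply Finset.sum_congr rfl; rintro q -
      ring
    simp only [Matrix.mulVec, dotProduct] at hSp ⊢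
    rw [hsplit, mul_add, Finset.mul_sum] at hk
    rw [hSp]
    have e1 : L⁻¹ i0 i0 * τ * ∑ q : Fin n, B p q * v (i0, q)
        = ∑ q : Fin n, τ * (L⁻¹ i0 i0 * B p q * v (i0, q)) := by
      rw [Finset.mul_sum]; apply Finset.sum_congr rfl; rintro q -; ring
    have e2 : ∑ j ∈ Finset.univ.erase i0,
        ∑ q : Fin n, τ * (L⁻¹ i0 j * B p q * v (j, q))
        = τ * ∑ j ∈ Finset.univ.erase i0,
            ∑ q : Fin n, L⁻¹ i0 j * B p q * v (j, q) := by
      rw [Finset.mul_sum]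
      apply Finset.sum_congr rfl; rintro j -
      rw [Finset.mul_sum]
    rw [e1, e2]
    linarith [hk]
  have hAdet : IsUnit A.det := (Matrix.isUnit_iff_isUnit_det A).mp hss
  calc (fun p => v (i0, p))
      = A⁻¹ *ᵥ (A *ᵥ fun p => v (i0, p)) := by
        rw [Matrix.mulVec_mulVec, Matrix.nonsing_inv_mul A hAdet, Matrix.one_mulVec]
    _ = -(A⁻¹ *ᵥ S) := by rw [hAv, Matrix.mulVec_neg]
end
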